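/- For all s ∈ S and all d_1, d_2 with d_0 ≥ d_1 ≥ d_2 ≥ 0: if there exists a path from (s, d_2) to t, then there exists a path from (s, d_1) to t, and the minimum cost of a path from (s, d_1) to t is at most the minimum cost of a path from (s, d_2) to t. Consequently, a node (s, d_2) whose best known arrival cost exceeds that of (s, d_1) with d_1 > d_2 is dominated: no source-to-t path through (s, d_2) is strictly cheaper than the best source-to-t path through (s, d_1). -/

import Mathlib

noncomputable section

/-- Sum of `w` over consecutive pairs of a list. -/
def pathCost {X : Type*} (w : X → X → ℝ) : List X → ℝ
  | [] => 0
  | [_] => 0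
  | a :: b :: rest => w a b + pathCost w (b :: rest)

/-- `p` is a path from `s` to `t` in the graph with edge set `E`. -/
def IsPathFrom {V : Type*} (E : Set (V × V)) (s t : V) (p : List V) : Prop :=
  p.head? = some s ∧ p.getLast? = some t ∧ p.Chain' (fun a b => (a, b) ∈ E)

lemma dominance_aux {σ : Type*} (d0 : ℕ)
    (E : Set (((σ × ℕ) ⊕ Unit) × ((σ × ℕ) ⊕ Unit)))
    (w : ((σ × ℕ) ⊕ Unit) → ((σ × ℕ) ⊕ Unit) → ℝ)
    (hmono : ∀ (s s' : σ) (d e : ℕ),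
      (Sum.inl (s, d), Sum.inl (s', e)) ∈ E → e ≤ d)
    (hhom : ∀ (s s' : σ) (d1 d2 e : ℕ), e ≤ d2 → d2 ≤ d1 → d1 ≤ d0 →
      (Sum.inl (s, d2), Sum.inl (s', e)) ∈ E →
      (Sum.inl (s, d1), Sum.inl (s', e + (d1 - d2))) ∈ E ∧
        w (Sum.inl (s, d1)) (Sum.inl (s', e + (d1 - d2))) ≤
          w (Sum.inl (s, d2)) (Sum.inl (s', e)))
    (hhomt : ∀ (s : σ) (d1 d2 : ℕ), d2 ≤ d1 → d1 ≤ d0 →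
      (Sum.inl (s, d2), Sum.inr ()) ∈ E →
      (Sum.inl (s, d1), Sum.inr ()) ∈ E ∧
        w (Sum.inl (s, d1)) (Sum.inr ()) ≤ w (Sum.inl (s, d2)) (Sum.inr ())) :
    ∀ (p : List ((σ × ℕ) ⊕ Unit)) (s : σ) (d2 d1 : ℕ), d2 ≤ d1 → d1 ≤ d0 →
      IsPathFrom E (Sum.inl (s, d2)) (Sum.inr ()) p →
      ∃ q, IsPathFrom E (Sum.inl (s, d1)) (Sum.inr ()) q ∧
        pathCost w q ≤ pathCost w p := by
  intro p
  induction p with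
  | nil => intro s d2 d1 _ _ hp; simp [IsPathFrom] at hp
  | cons a l ih =>
    intro s d2 d1 h21 h10 hp
    obtain ⟨hhead, hlast, hchain⟩ := hp
    simp only [List.head?_cons, Option.some_inj] at hhead
    subst hhead
    cases l with
    | nil => simp [List.getLast?] at hlast
    | cons b rest =>
      simp only [List.Chain', List.isChain_cons_cons] at hchain
      obtain ⟨hedge, hchain⟩ := hchain
      rw [List.getLast?_cons_cons] at hlast
      cases b with
      | inr u =>
        obtain ⟨hE, hw⟩ := hhomt s d1 d2 h21 h10 hedge
        refine ⟨Sum.inl (s, d1) :: Sum.inr () :: rest, ⟨rfl, ?_, ?_⟩, ?_⟩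
        · rw [List.getLast?_cons_cons]; exact hlast
        · simp only [List.Chain', List.isChain_cons_cons]; exact ⟨hE, hchain⟩
        · show w _ _ + _ ≤ w _ _ + _
          exact add_le_add_left hw _
      | inl se =>
        obtain ⟨s', e⟩ := se
        have he : e ≤ d2 := hmono s s' d2 e hedge
        obtain ⟨hE, hw⟩ := hhom s s' d1 d2 e he h21 h10 hedge
        have he1 : e + (d1 - d2) ≤ d0 := by omega
        have he2 : e ≤ e + (d1 - d2) := Nat.le_add_right _ _
        obtain ⟨q, ⟨hqh, hql, hqc⟩, hqcost⟩ :=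
          ih s' e (e + (d1 - d2)) he2 he1 ⟨rfl, hlast, hchain⟩
        cases q with
        | nil => simp at hqh
        | cons qa qt =>
          simp only [List.head?_cons, Option.some_inj] at hqh
          subst hqh
          refine ⟨Sum.inl (s, d1) :: Sum.inl (s', e + (d1 - d2)) :: qt, ⟨rfl, ?_, ?_⟩, ?_⟩
          · rw [List.getLast?_cons_cons]; exact hql
          · simp only [List.Chain', List.isChain_cons_cons]; exact ⟨hE, hqc⟩
          · show w _ _ + _ ≤ w _ _ + _
            exact add_le_add hw hqcost

/-- Dominance in the pricing graph. Vertices are state–demand pairs `Sum.inl (s, d)` with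
`d ≤ d0`, plus the sink `Sum.inr ()`. Edges go from `(s, d)` to `(s′, d − δ)` (demand is
consumed along edges), and the graph is homogeneous in demand: any edge available from
demand level `d₂` is available, with no larger weight, from any level `d₁` with
`d₂ ≤ d₁ ≤ d0` (with the same demand consumption, resp. into the sink). Then whenever
`d₂ ≤ d₁ ≤ d0`: any path from `(s, d₂)` to the sink yields one from `(s, d₁)`, and the
minimum cost of a path from `(s, d₁)` to the sink is at most that from `(s, d₂)`. -/
theorem dominance_of_higher_remaining_capacity {σ : Type*} [Fintype σ] (d0 : ℕ)
    (E : Set (((σ × ℕ) ⊕ Unit) × ((σ × ℕ) ⊕ Unit)))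
    (w : ((σ × ℕ) ⊕ Unit) → ((σ × ℕ) ⊕ Unit) → ℝ)
    (hvert : ∀ e ∈ E, (∀ s d, e.1 = Sum.inl (s, d) → d ≤ d0) ∧
      (∀ s d, e.2 = Sum.inl (s, d) → d ≤ d0))
    (hmono : ∀ (s s' : σ) (d e : ℕ),
      (Sum.inl (s, d), Sum.inl (s', e)) ∈ E → e ≤ d)
    (hhom : ∀ (s s' : σ) (d1 d2 e : ℕ), e ≤ d2 → d2 ≤ d1 → d1 ≤ d0 →
      (Sum.inl (s, d2), Sum.inl (s', e)) ∈ E →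
      (Sum.inl (s, d1), Sum.inl (s', e + (d1 - d2))) ∈ E ∧
        w (Sum.inl (s, d1)) (Sum.inl (s', e + (d1 - d2))) ≤
          w (Sum.inl (s, d2)) (Sum.inl (s', e)))
    (hhomt : ∀ (s : σ) (d1 d2 : ℕ), d2 ≤ d1 → d1 ≤ d0 →
      (Sum.inl (s, d2), Sum.inr ()) ∈ E →
      (Sum.inl (s, d1), Sum.inr ()) ∈ E ∧
        w (Sum.inl (s, d1)) (Sum.inr ()) ≤ w (Sum.inl (s, d2)) (Sum.inr ())) :
    ∀ (s : σ) (d1 d2 : ℕ), d2 ≤ d1 → d1 ≤ d0 →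
      ((∃ p, IsPathFrom E (Sum.inl (s, d2)) (Sum.inr ()) p) →
        ∃ p, IsPathFrom E (Sum.inl (s, d1)) (Sum.inr ()) p) ∧
      sInf {r : EReal | ∃ p, IsPathFrom E (Sum.inl (s, d1)) (Sum.inr ()) p ∧
          r = (pathCost w p : EReal)} ≤
        sInf {r : EReal | ∃ p, IsPathFrom E (Sum.inl (s, d2)) (Sum.inr ()) p ∧
          r = (pathCost w p : EReal)} := by
  intro s d1 d2 h21 h10
  constructor
  · rintro ⟨p, hp⟩
    obtain ⟨q, hq, -⟩ := dominance_aux d0 E w hmono hhom hhomt p s d2 d1 h21 h10 hp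
    exact ⟨q, hq⟩
  · apply le_sInf
    rintro r ⟨p, hp, rfl⟩
    obtain ⟨q, hq, hcost⟩ := dominance_aux d0 E w hmono hhom hhomt p s d2 d1 h21 h10 hp
    refine le_trans (sInf_le (show ((pathCost w q : ℝ) : EReal) ∈ _ from ⟨q, hq, rfl⟩)) ?_
    exact_mod_cast hcost
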